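/- Let X be a subshift over a finite alphabet A and n ≥ 1. Then every word w ∈ L_n(X) which is not a subword of any n-branch word of X is a subword of an isolated periodic point of X. -/

import Mathlib

open Filter Topology

/-- The left shift on bi-infinite sequences, as a bijection. -/
def shiftPerm (A : Type) : Equiv.Perm (ℤ → A) where
  toFun x n := x (n + 1)
  invFun x n := x (n - 1)
  left_inv x := funext fun n => by simp
  right_inv x := funext fun n => by simp

/-- A subshift: a closed, shift-invariant subset of the full shift. -/
def IsSubshift {A : Type} [TopologicalSpace A] (X : Set (ℤ → A)) : Prop :=
  IsClosed X ∧ (shiftPerm A) '' X = X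

/-- The word `w` occurs in some point of `X`. -/
def WordIn {A : Type} (X : Set (ℤ → A)) (w : List A) : Prop :=
  ∃ x ∈ X, ∃ i : ℤ, ∀ j : Fin w.length, x (i + ((j : ℕ) : ℤ)) = w.get j

/-- The language of `X`. -/
def language {A : Type} (X : Set (ℤ → A)) : Set (List A) :=
  {w | WordIn X w}

/-- The word complexity function `c_n(X)`: the number of `n`-letter words of `X`. -/
noncomputable def complexity {A : Type} (X : Set (ℤ → A)) (n : ℕ) : ℕ :=
  Nat.card {w : List A // w.length = n ∧ w ∈ language X}

/-- `w` is a right-special word of length `n` for `X`. -/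
def RightSpecial {A : Type} (X : Set (ℤ → A)) (n : ℕ) (w : List A) : Prop :=
  w.length = n ∧ w ∈ language X ∧
    ∃ a b : A, a ≠ b ∧ (w ++ [a]) ∈ language X ∧ (w ++ [b]) ∈ language X

/-- `w` is a left-special word of length `n` for `X`. -/
def LeftSpecial {A : Type} (X : Set (ℤ → A)) (n : ℕ) (w : List A) : Prop :=
  w.length = n ∧ w ∈ language X ∧
    ∃ c d : A, c ≠ d ∧ (c :: w) ∈ language X ∧ (d :: w) ∈ language X

/-- `w` satisfies the defining constraints of an `n`-right branch word: it is in the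
language, begins with a right-special word of length `n`, contains no other
right-special word of length `n`, and has no repeated `n`-letter subword. -/
def RightBranchCand {A : Type} (X : Set (ℤ → A)) (n : ℕ) (w : List A) : Prop :=
  w ∈ language X ∧ n ≤ w.length ∧ RightSpecial X n (w.take n) ∧
    (∀ i, i + n ≤ w.length → RightSpecial X n ((w.drop i).take n) → i = 0) ∧
    (∀ i j, i + n ≤ w.length → j + n ≤ w.length →
      (w.drop i).take n = (w.drop j).take n → i = j)

/-- `w` satisfies the defining constraints of an `n`-left branch word. -/
def LeftBranchCand {A : Type} (X : Set (ℤ → A)) (n : ℕ) (w : List A) : Prop :=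
  w ∈ language X ∧ n ≤ w.length ∧ LeftSpecial X n (w.drop (w.length - n)) ∧
    (∀ i, i + n ≤ w.length → LeftSpecial X n ((w.drop i).take n) → i + n = w.length) ∧
    (∀ i j, i + n ≤ w.length → j + n ≤ w.length →
      (w.drop i).take n = (w.drop j).take n → i = j)

/-- An `n`-right branch word: maximal under subword inclusion among words
satisfying the right branch constraints. -/
def IsRightBranchWord {A : Type} (X : Set (ℤ → A)) (n : ℕ) (w : List A) : Prop :=
  RightBranchCand X n w ∧ ∀ w', RightBranchCand X n w' → w <:+: w' → w' = w

/-- An `n`-left branch word: maximal under subword inclusion among words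
satisfying the left branch constraints. -/
def IsLeftBranchWord {A : Type} (X : Set (ℤ → A)) (n : ℕ) (w : List A) : Prop :=
  LeftBranchCand X n w ∧ ∀ w', LeftBranchCand X n w' → w <:+: w' → w' = w

/-- An `n`-branch word is an `n`-left or `n`-right branch word. -/
def IsBranchWord {A : Type} (X : Set (ℤ → A)) (n : ℕ) (w : List A) : Prop :=
  IsRightBranchWord X n w ∨ IsLeftBranchWord X n w

/-- `x` is an isolated point of `X`. -/
def IsIsolatedPoint {A : Type} [TopologicalSpace A] (X : Set (ℤ → A)) (x : ℤ → A) : Prop :=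
  ∃ U : Set (ℤ → A), IsOpen U ∧ U ∩ X = {x}

/-- `x` is an isolated periodic point of `X`. -/
def IsIsolatedPeriodicPt {A : Type} [TopologicalSpace A] (X : Set (ℤ → A)) (x : ℤ → A) : Prop :=
  x ∈ X ∧ IsIsolatedPoint X x ∧ ∃ p : ℕ, 1 ≤ p ∧ ∀ m : ℤ, x (m + (p : ℤ)) = x m

/-! ### Window API -/

/-- The window of `x` of length `n` starting at position `i`. -/
def win {A : Type} (x : ℤ → A) (i : ℤ) (n : ℕ) : List A :=
  (List.range n).map (fun j : ℕ => x (i + (j : ℤ)))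

namespace win

variable {A : Type} {x z : ℤ → A} {i j : ℤ} {n : ℕ}

@[simp] lemma length : (win x i n).length = n := by
  simp [win]

lemma getElem {t : ℕ} (ht : t < n) (h : t < (win x i n).length) :
    (win x i n)[t] = x (i + t) := by
  simp [win]

lemma ext (h : ∀ t : ℕ, t < n → x (i + t) = z (j + t)) : win x i n = win z j n := by
  apply List.ext_getElem (by simp)
  intro t h1 h2
  rw [getElem (by simpa using h1), getElem (by simpa using h2)]
  exact h t (by simpa using h1)

lemma apply_of_eq (h : win x i n = win z j n) {t : ℕ} (ht : t < n) :
    x (i + t) = z (j + t) := by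
  have h1 : t < (win x i n).length := by simpa using ht
  have h2 : t < (win z j n).length := by simpa using ht
  have := List.getElem_of_eq h h1
  rwa [getElem ht, getElem ht] at this

lemma congr' (h : i = j) : win x i n = win x j n := by rw [h]

lemma congr'' {i' j' : ℤ} (hi : i = i') (hj : j = j') (h : win x i n = win z j n) :
    win x i' n = win z j' n := by subst hi; subst hj; exact h

lemma mem {X : Set (ℤ → A)} (hx : x ∈ X) : win x i n ∈ language X := by
  refine ⟨x, hx, i, fun t => ?_⟩
  have := getElem (x := x) (i := i) (n := n) (t := t)
    (by simpa using t.2) (by simpa using t.2)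
  rw [List.get_eq_getElem, ← this]

lemma succ_right : win x i (n + 1) = win x i n ++ [x (i + n)] := by
  simp [win, List.range_succ]

lemma succ_left : win x i (n + 1) = x i :: win x (i + 1) n := by
  simp only [win, List.range_succ_eq_map, List.map_cons, List.map_map]
  congr 1
  · simp
  · apply List.map_congr_left
    intro t _
    simp only [Function.comp]
    congr 1
    push_cast
    ring

lemma drop (d : ℕ) : (win x i n).drop d = win x (i + d) (n - d) := by
  apply List.ext_getElem (by simp)
  intro t h1 h2
  rw [List.getElem_drop, getElem (by simp at h1 ⊢; omega), getElem (by simpa using h2)]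
  congr 1
  push_cast
  ring

lemma take (t : ℕ) : (win x i n).take t = win x i (min t n) := by
  apply List.ext_getElem (by simp)
  intro s h1 h2
  rw [List.getElem_take, getElem (by simp at h1; omega), getElem (by simpa using h2)]

lemma sub {d m : ℕ} (h : d + m ≤ n) : ((win x i n).drop d).take m = win x (i + d) m := by
  rw [drop, take]
  congr 1
  omega

lemma isInfix {d m : ℕ} (h : d + m ≤ n) : win x (i + d) m <:+: win x i n := by
  rw [← sub h]
  exact ((win x i n).drop d).take_prefix m |>.isInfix.trans ((win x i n).drop_suffix d).isInfix

end win

/-! ### Forcing lemmas -/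

section Forcing

variable {A : Type} {X : Set (ℤ → A)} {n : ℕ} {x z : ℤ → A} {i j : ℤ}

lemma step_right (hx : x ∈ X) (hz : z ∈ X)
    (h : win x i n = win z j n) (hns : ¬ RightSpecial X n (win x i n)) :
    x (i + n) = z (j + n) ∧ win x (i + 1) n = win z (j + 1) n := by
  have hl : x (i + n) = z (j + n) := by
    by_contra hne
    exact hns ⟨by simp, win.mem hx, x (i + n), z (j + n), hne,
      by rw [← win.succ_right]; exact win.mem hx,
      by rw [h, ← win.succ_right]; exact win.mem hz⟩
  have h1 : win x i (n + 1) = win z j (n + 1) := by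
    rw [win.succ_right, win.succ_right, h, hl]
  rw [win.succ_left, win.succ_left] at h1
  exact ⟨hl, (List.cons.injEq _ _ _ _).mp h1 |>.2⟩

lemma step_left (hx : x ∈ X) (hz : z ∈ X)
    (h : win x i n = win z j n) (hns : ¬ LeftSpecial X n (win x i n)) :
    x (i - 1) = z (j - 1) ∧ win x (i - 1) n = win z (j - 1) n := by
  have hx1 : win x (i - 1) (n + 1) = x (i - 1) :: win x i n := by
    rw [win.succ_left]; congr 2; ring
  have hz1 : win z (j - 1) (n + 1) = z (j - 1) :: win z j n := by
    rw [win.succ_left]; congr 2; ring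
  have hl : x (i - 1) = z (j - 1) := by
    by_contra hne
    exact hns ⟨by simp, win.mem hx, x (i - 1), z (j - 1), hne,
      by rw [← hx1]; exact win.mem hx,
      by rw [h, ← hz1]; exact win.mem hz⟩
  have h1 : win x (i - 1) (n + 1) = win z (j - 1) (n + 1) := by
    rw [hx1, hz1, h, hl]
  refine ⟨hl, ?_⟩
  have := congrArg (List.take n) h1
  rwa [win.take, win.take, show min n (n+1) = n by omega] at this

end Forcing

/-! ### Candidates are bounded; maximal branch words exist -/

section Maximal

variable {A : Type} [Fintype A] {X : Set (ℤ → A)} {n : ℕ}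

lemma length_bound (hn : 1 ≤ n) {c : List A} (hnc : n ≤ c.length)
    (h5 : ∀ i j, i + n ≤ c.length → j + n ≤ c.length →
      (c.drop i).take n = (c.drop j).take n → i = j) :
    c.length ≤ Fintype.card A ^ n + n := by
  classical
  have key : c.length + 1 - n ≤ Fintype.card A ^ n := by
    have hinj : Function.Injective
        (fun (i : Fin (c.length + 1 - n)) (t : Fin n) =>
          c.get ⟨(i : ℕ) + (t : ℕ), by omega⟩) := by
      intro a b hab
      have ha : (a : ℕ) + n ≤ c.length := by omega
      have hb : (b : ℕ) + n ≤ c.length := by omega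
      have : (c.drop (a : ℕ)).take n = (c.drop (b : ℕ)).take n := by
        apply List.ext_getElem
        · simp; omega
        · intro t h1 h2
          have htn : t < n := by simp at h1; omega
          rw [List.getElem_take, List.getElem_drop, List.getElem_take, List.getElem_drop]
          have := congrFun hab ⟨t, htn⟩
          simpa [List.get_eq_getElem] using this
      exact Fin.ext (h5 _ _ ha hb this)
    have := Fintype.card_le_of_injective _ hinj
    simpa [Fintype.card_fun] using this
  omega

lemma exists_max_right (hn : 1 ≤ n) {v c : List A} (hc : RightBranchCand X n c)
    (hvc : v <:+: c) : ∃ b, IsRightBranchWord X n b ∧ v <:+: b := by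
  classical
  set B := Fintype.card A ^ n + n with hB
  set P : ℕ → Prop := fun m => ∃ c', RightBranchCand X n c' ∧ v <:+: c' ∧ c'.length = m with hP
  have hbnd : ∀ c', RightBranchCand X n c' → c'.length ≤ B :=
    fun c' hc' => length_bound hn hc'.2.1 hc'.2.2.2.2
  have hPc : P c.length := ⟨c, hc, hvc, rfl⟩
  have hspec : P (Nat.findGreatest P B) := Nat.findGreatest_spec (hbnd c hc) hPc
  obtain ⟨b, hb, hvb, hlb⟩ := hspec
  refine ⟨b, ⟨hb, fun w' hw' hbw' => ?_⟩, hvb⟩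
  have h1 : w'.length ≤ Nat.findGreatest P B :=
    Nat.le_findGreatest (hbnd w' hw') ⟨w', hw', hvb.trans hbw', rfl⟩
  have h2 : b.length ≤ w'.length := hbw'.length_le
  exact (hbw'.sublist.eq_of_length (by omega)).symm

end Maximal

lemma exists_max_left {A : Type} [Fintype A] {X : Set (ℤ → A)} {n : ℕ}
    (hn : 1 ≤ n) {v c : List A} (hc : LeftBranchCand X n c)
    (hvc : v <:+: c) : ∃ b, IsLeftBranchWord X n b ∧ v <:+: b := by
  classical
  set B := Fintype.card A ^ n + n with hB
  set P : ℕ → Prop := fun m => ∃ c', LeftBranchCand X n c' ∧ v <:+: c' ∧ c'.length = m with hP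
  have hbnd : ∀ c', LeftBranchCand X n c' → c'.length ≤ B :=
    fun c' hc' => length_bound hn hc'.2.1 hc'.2.2.2.2
  have hPc : P c.length := ⟨c, hc, hvc, rfl⟩
  have hspec : P (Nat.findGreatest P B) := Nat.findGreatest_spec (hbnd c hc) hPc
  obtain ⟨b, hb, hvb, hlb⟩ := hspec
  refine ⟨b, ⟨hb, fun w' hw' hbw' => ?_⟩, hvb⟩
  have h1 : w'.length ≤ Nat.findGreatest P B :=
    Nat.le_findGreatest (hbnd w' hw') ⟨w', hw', hvb.trans hbw', rfl⟩
  have h2 : b.length ≤ w'.length := hbw'.length_le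
  exact (hbw'.sublist.eq_of_length (by omega)).symm

/-- Every word of length `n` in the language of `X` which is not a
subword of any `n`-branch word is a subword of an isolated periodic point of `X`. -/
theorem not_in_branch_word_imp_isolated_periodic
    {A : Type} [Fintype A] [TopologicalSpace A] [DiscreteTopology A]
    (X : Set (ℤ → A)) (hX : IsSubshift X) (n : ℕ) (hn : 1 ≤ n)
    (w : List A) (hwlen : w.length = n) (hwlang : w ∈ language X)
    (hnb : ∀ v, IsBranchWord X n v → ¬ w <:+: v) :
    ∃ x : ℤ → A, IsIsolatedPeriodicPt X x ∧
      ∃ i : ℤ, ∀ j : Fin w.length, x (i + ((j : ℕ) : ℤ)) = w.get j := by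
  classical
  obtain ⟨x, hx, a, hxa⟩ := hwlang
  have hw : win x a n = w := by
    apply List.ext_getElem (by simp [hwlen])
    intro t h1 h2
    rw [win.getElem (by simpa using h1)]
    have := hxa ⟨t, by omega⟩
    simpa [List.get_eq_getElem] using this
  have hwlang' : w ∈ language X := hw ▸ win.mem hx
  set u : ℕ → List A := fun m => win x (a + (m : ℤ)) n with hu
  have hud : ∀ m : ℕ, u m = win x (a + (m : ℤ)) n := fun m => by rw [hu]
  have hu0 : u 0 = w := by rw [hud, win.congr' (by omega : a + ((0:ℕ):ℤ) = a), hw]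
  -- no branch-word candidate contains w
  have hR : ∀ c, RightBranchCand X n c → ¬ w <:+: c := by
    intro c hc hwc
    obtain ⟨b, hb, hwb⟩ := exists_max_right hn hc hwc
    exact hnb b (Or.inl hb) hwb
  have hL : ∀ c, LeftBranchCand X n c → ¬ w <:+: c := by
    intro c hc hwc
    obtain ⟨b, hb, hwb⟩ := exists_max_left hn hc hwc
    exact hnb b (Or.inr hb) hwb
  -- step 1 : w itself is neither right- nor left-special
  have hwRS : ¬ RightSpecial X n w := by
    intro hrs
    refine hR w ⟨hwlang', by omega, ?_, ?_, ?_⟩ (List.infix_refl w)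
    · rwa [show w.take n = w from by rw [← hwlen]; exact List.take_length]
    · intro i hi _; omega
    · intro i j hi hj _; omega
  have hwLS : ¬ LeftSpecial X n w := by
    intro hls
    refine hL w ⟨hwlang', by omega, ?_, ?_, ?_⟩ (List.infix_refl w)
    · rwa [show w.drop (w.length - n) = w from by rw [hwlen]; simp]
    · intro i hi _; omega
    · intro i j hi hj _; omega
  -- master lemma : among pairwise distinct initial windows there is no left-special word
  have NL : ∀ m : ℕ, (∀ i j : ℕ, i < j → j ≤ m → u i ≠ u j) →
      ∀ s, s ≤ m → ¬ LeftSpecial X n (u s) := by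
    intro m hdist s hsm hs
    have hex : ∃ t, t ≤ m ∧ LeftSpecial X n (u t) := ⟨s, hsm, hs⟩
    obtain ⟨hj0m, hj0⟩ := Nat.find_spec hex
    set j0 := Nat.find hex with hj0def
    set c := win x a (j0 + n) with hc
    have hcl : c.length = j0 + n := win.length
    have hsub : ∀ i : ℕ, i + n ≤ j0 + n → (c.drop i).take n = u i := by
      intro i hi
      rw [hc, win.sub hi, hud]
    refine hL c ⟨win.mem hx, by omega, ?_, ?_, ?_⟩ ?_
    · have hd : c.drop (c.length - n) = u j0 := by
        have h1 : (c.drop (c.length - n)).take n = u j0 := by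
          rw [hcl, show j0 + n - n = j0 from by omega]
          exact hsub j0 (by omega)
        rw [← h1]
        exact (List.take_of_length_le (by rw [List.length_drop, hcl]; omega)).symm
      rw [hd]
      exact hj0
    · intro i hi hlsi
      rw [hcl] at hi
      rw [hsub i hi] at hlsi
      have : j0 ≤ i := Nat.find_min' hex ⟨by omega, hlsi⟩
      omega
    · intro i j hi hj heq
      rw [hcl] at hi hj
      rw [hsub i hi, hsub j hj] at heq
      by_contra hne
      rcases Nat.lt_or_ge i j with h | h
      · exact hdist i j h (by omega) heq
      · exact hdist j i (by omega) (by omega) heq.symm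
    · have : (c.drop 0).take n = u 0 := hsub 0 (by omega)
      rw [List.drop_zero, hu0] at this
      rw [← this]
      exact (c.take_prefix n).isInfix
  -- pigeonhole : some window repeats
  have hpig : ∃ kk, ∃ i, i < kk ∧ u i = u kk := by
    obtain ⟨p, q, hpq, hfe⟩ := Fintype.exists_ne_map_eq_of_card_lt
      (fun (m : Fin (Fintype.card A ^ n + 1)) (t : Fin n) =>
        x (a + ((m : ℕ) : ℤ) + ((t : ℕ) : ℤ)))
      (by simp [Fintype.card_fun])
    have hweq : u (p : ℕ) = u (q : ℕ) := by
      rw [hud, hud]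
      apply win.ext
      intro t ht
      have := congrFun hfe ⟨t, ht⟩
      simpa using this
    have hpq' : (p : ℕ) ≠ (q : ℕ) := fun h => hpq (Fin.ext h)
    rcases Nat.lt_or_ge (p : ℕ) (q : ℕ) with h | h
    · exact ⟨q, p, h, hweq⟩
    · exact ⟨p, q, by omega, hweq.symm⟩
  set k := Nat.find hpig with hkdef
  obtain ⟨i0, hi0k, hieq⟩ := Nat.find_spec hpig
  have hk1 : 1 ≤ k := by omega
  have hkmin : ∀ j', j' < k → ¬∃ i, i < j' ∧ u i = u j' := fun j' hj' => Nat.find_min hpig hj'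
  have hdistk : ∀ i j : ℕ, i < j → j ≤ k - 1 → u i ≠ u j := by
    intro i j hij hj hne
    exact hkmin j (by omega) ⟨i, hij, hne⟩
  -- the first repetition closes a cycle on w
  have hi00 : i0 = 0 := by
    by_contra hne0
    have hi01 : 1 ≤ i0 := by omega
    -- if the preceding letters agree, an earlier repetition occurs
    have hheads : x (a + ((i0 - 1 : ℕ) : ℤ)) ≠ x (a + ((k - 1 : ℕ) : ℤ)) := by
      intro hh
      have : u (i0 - 1) = u (k - 1) := by
        rw [hud, hud]
        apply win.ext
        intro t ht
        rcases Nat.eq_zero_or_pos t with rfl | ht1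
        · simpa using hh
        · have hieq' : win x (a + ((i0 : ℕ) : ℤ)) n = win x (a + ((k : ℕ) : ℤ)) n := by
            rw [← hud, ← hud]; exact hieq
          have h2 := win.apply_of_eq hieq' (show t - 1 < n by omega)
          have e1 : a + ((i0 - 1 : ℕ) : ℤ) + (t : ℤ) =
              a + ((i0 : ℕ) : ℤ) + ((t - 1 : ℕ) : ℤ) := by omega
          have e2 : a + ((k - 1 : ℕ) : ℤ) + (t : ℤ) =
              a + ((k : ℕ) : ℤ) + ((t - 1 : ℕ) : ℤ) := by omega
          rw [e1, e2]
          exact h2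
      exact hdistk (i0 - 1) (k - 1) (by omega) (by omega) this
    -- hence u i0 is left-special
    have hls : LeftSpecial X n (u i0) := by
      refine ⟨by rw [hud]; exact win.length, by rw [hud]; exact win.mem hx,
        x (a + ((i0 - 1 : ℕ) : ℤ)), x (a + ((k - 1 : ℕ) : ℤ)), hheads, ?_, ?_⟩
      · have h1 : win x (a + ((i0 - 1 : ℕ) : ℤ)) (n + 1) =
            x (a + ((i0 - 1 : ℕ) : ℤ)) :: u i0 := by
          rw [win.succ_left, hud]
          congr 2
          omega
        rw [← h1]
        exact win.mem hx
      · have h1 : win x (a + ((k - 1 : ℕ) : ℤ)) (n + 1) =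
            x (a + ((k - 1 : ℕ) : ℤ)) :: u i0 := by
          rw [win.succ_left, hieq, hud]
          congr 2
          omega
        rw [← h1]
        exact win.mem hx
    exact NL (k - 1) hdistk i0 (by omega) hls
  have hcyc : u k = u 0 := by rw [← hi00, hieq]
  have noLS : ∀ s, s < k → ¬ LeftSpecial X n (u s) :=
    fun s hs => NL (k - 1) hdistk s (by omega)
  have noRS : ∀ s, s < k → ¬ RightSpecial X n (u s) := by
    intro s hsk hrs
    have hs1 : 1 ≤ s := by
      rcases Nat.eq_zero_or_pos s with rfl | h
      · exact ((hwRS (hu0 ▸ hrs)).elim : 1 ≤ 0)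
      · exact h
    set m := Nat.findGreatest (fun t => RightSpecial X n (u t)) (k - 1) with hmdef
    have hm : RightSpecial X n (u m) := by
      rw [hmdef]
      exact Nat.findGreatest_spec (P := fun t => RightSpecial X n (u t))
        (show s ≤ k - 1 by omega) hrs
    have hmge : s ≤ m := by
      rw [hmdef]
      exact Nat.le_findGreatest (by omega) hrs
    have hmk : m ≤ k - 1 := by
      rw [hmdef]
      exact Nat.findGreatest_le _
    have hm1 : 1 ≤ m := by omega
    have hmax : ∀ t, m < t → t ≤ k - 1 → ¬ RightSpecial X n (u t) := by
      intro t h1 h2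
      rw [hmdef] at h1
      exact Nat.findGreatest_is_greatest h1 h2
    set c := win x (a + (m : ℤ)) ((k - m) + n) with hc
    have hcl : c.length = (k - m) + n := win.length
    have hsub : ∀ i : ℕ, i + n ≤ (k - m) + n → (c.drop i).take n = u (m + i) := by
      intro i hi
      rw [hc, win.sub hi, hud]
      exact win.congr' (by omega)
    refine hR c ⟨win.mem hx, by omega, ?_, ?_, ?_⟩ ?_
    · have : c.take n = u m := by
        have h0 := hsub 0 (by omega)
        rwa [List.drop_zero, Nat.add_zero] at h0
      rw [this]
      exact hm
    · intro i hi hrsi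
      rw [hcl] at hi
      rw [hsub i hi] at hrsi
      by_contra hi0
      have hik : m + i ≤ k := by omega
      rcases Nat.lt_or_ge (m + i) k with h | h
      · exact hmax (m + i) (by omega) (by omega) hrsi
      · have : m + i = k := by omega
        rw [this, hcyc, hu0] at hrsi
        exact hwRS hrsi
    · intro i j hi hj heq
      rw [hcl] at hi hj
      rw [hsub i hi, hsub j hj] at heq
      by_contra hne
      have hik : m + i ≤ k := by omega
      have hjk : m + j ≤ k := by omega
      rcases Nat.lt_or_ge (m + i) k with h1 | h1 <;> rcases Nat.lt_or_ge (m + j) k with h2 | h2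
      · rcases Nat.lt_or_ge i j with h | h
        · exact hdistk (m + i) (m + j) (by omega) (by omega) heq
        · exact hdistk (m + j) (m + i) (by omega) (by omega) heq.symm
      · have : m + j = k := by omega
        rw [this, hcyc] at heq
        exact hdistk 0 (m + i) (by omega) (by omega) heq.symm
      · have : m + i = k := by omega
        rw [this, hcyc] at heq
        exact hdistk 0 (m + j) (by omega) (by omega) heq
      · omega
    · have h0 := hsub (k - m) (by omega)
      rw [show m + (k - m) = k from by omega, hcyc, hu0] at h0
      rw [← h0]
      exact ((c.drop (k - m)).take_prefix n).isInfix.trans ((c.drop_suffix (k - m)).isInfix)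
  -- every forward window equals some cycle window
  have G : ∀ m : ℕ, ∃ s, s < k ∧ win x (a + (m : ℤ)) n = u s := by
    intro m
    induction m with
    | zero => exact ⟨0, by omega, by rw [hud]⟩
    | succ m ih =>
      obtain ⟨s, hs, heq⟩ := ih
      rw [hud] at heq
      have hns : ¬ RightSpecial X n (win x (a + (m : ℤ)) n) := by
        rw [heq, ← hud]; exact noRS s hs
      have hstep := (step_right hx hx heq hns).2
      rcases Nat.lt_or_ge (s + 1) k with h | h
      · refine ⟨s + 1, h, ?_⟩
        rw [hud]
        exact win.congr'' (by omega) (by omega) hstep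
      · refine ⟨0, by omega, ?_⟩
        rw [← hcyc, hud]
        exact win.congr'' (by omega) (by omega) hstep
  have G' : ∀ m : ℕ, ∃ s, s < k ∧ win x (a - (m : ℤ)) n = u s := by
    intro m
    induction m with
    | zero => exact ⟨0, by omega, by rw [hud]; exact win.congr' (by omega)⟩
    | succ m ih =>
      obtain ⟨s, hs, heq⟩ := ih
      rcases Nat.eq_zero_or_pos s with rfl | hs1
      · rw [← hcyc, hud] at heq
        have hns : ¬ LeftSpecial X n (win x (a - (m : ℤ)) n) := by
          rw [heq, ← hud, hcyc]; exact noLS 0 (by omega)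
        have hstep := (step_left hx hx heq hns).2
        refine ⟨k - 1, by omega, ?_⟩
        rw [hud]
        exact win.congr'' (by omega) (by omega) hstep
      · rw [hud] at heq
        have hns : ¬ LeftSpecial X n (win x (a - (m : ℤ)) n) := by
          rw [heq, ← hud]; exact noLS s hs
        have hstep := (step_left hx hx heq hns).2
        refine ⟨s - 1, by omega, ?_⟩
        rw [hud]
        exact win.congr'' (by omega) (by omega) hstep
  -- periodicity of windows
  have F : ∀ m : ℕ, win x (a + (m : ℤ)) n = win x (a + (m : ℤ) + (k : ℤ)) n := by
    intro m
    induction m with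
    | zero =>
      have hcycw : win x (a + ((0 : ℕ) : ℤ)) n = win x (a + ((k : ℕ) : ℤ)) n := by
        rw [show a + ((0 : ℕ) : ℤ) = a + ((0 : ℕ) : ℤ) from rfl, ← hud, ← hud, hcyc]
      exact win.congr'' (by omega) (by omega) hcycw
    | succ m ih =>
      obtain ⟨s, hs, heq⟩ := G m
      have hns : ¬ RightSpecial X n (win x (a + (m : ℤ)) n) := by
        rw [heq]; exact noRS s hs
      have hstep := (step_right hx hx ih hns).2
      exact win.congr'' (by omega) (by omega) hstep
  have F' : ∀ m : ℕ, win x (a - (m : ℤ)) n = win x (a - (m : ℤ) + (k : ℤ)) n := by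
    intro m
    induction m with
    | zero =>
      have hcycw : win x (a + ((0 : ℕ) : ℤ)) n = win x (a + ((k : ℕ) : ℤ)) n := by
        rw [show a + ((0 : ℕ) : ℤ) = a + ((0 : ℕ) : ℤ) from rfl, ← hud, ← hud, hcyc]
      exact win.congr'' (by omega) (by omega) hcycw
    | succ m ih =>
      obtain ⟨s, hs, heq⟩ := G' m
      have hns : ¬ LeftSpecial X n (win x (a - (m : ℤ)) n) := by
        rw [heq]; exact noLS s hs
      have hstep := (step_left hx hx ih hns).2
      exact win.congr'' (by omega) (by omega) hstep
  have periodic : ∀ m : ℤ, x (m + (k : ℤ)) = x m := by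
    intro m
    rcases le_or_gt a m with hm | hm
    · set t := (m - a).toNat with htdef
      have hat : a + (t : ℤ) = m := by rw [htdef]; omega
      have := win.apply_of_eq (F t) (show 0 < n by omega)
      rw [hat] at this
      simpa using this.symm
    · set t := (a - m).toNat with htdef
      have hat : a - (t : ℤ) = m := by rw [htdef]; omega
      have := win.apply_of_eq (F' t) (show 0 < n by omega)
      rw [hat] at this
      simpa using this.symm
  -- uniqueness : x is the only point of X with window w at a
  have hU : ∀ z, z ∈ X → win z a n = win x a n → z = x := by
    intro z hz hza
    have Z1 : ∀ m : ℕ, win x (a + (m : ℤ)) n = win z (a + (m : ℤ)) n := by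
      intro m
      induction m with
      | zero => exact win.congr'' (by omega) (by omega) hza.symm
      | succ m ih =>
        obtain ⟨s, hs, heq⟩ := G m
        have hns : ¬ RightSpecial X n (win x (a + (m : ℤ)) n) := by
          rw [heq]; exact noRS s hs
        have hstep := (step_right hx hz ih hns).2
        exact win.congr'' (by omega) (by omega) hstep
    have Z2 : ∀ m : ℕ, win x (a - (m : ℤ)) n = win z (a - (m : ℤ)) n := by
      intro m
      induction m with
      | zero => exact win.congr'' (by omega) (by omega) hza.symm
      | succ m ih =>
        obtain ⟨s, hs, heq⟩ := G' m
        have hns : ¬ LeftSpecial X n (win x (a - (m : ℤ)) n) := by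
          rw [heq]; exact noLS s hs
        have hstep := (step_left hx hz ih hns).2
        exact win.congr'' (by omega) (by omega) hstep
    funext t
    rcases le_or_gt a t with ht | ht
    · have hat : a + (((t - a).toNat : ℕ) : ℤ) = t := by omega
      have := win.apply_of_eq (Z1 (t - a).toNat) (show 0 < n by omega)
      rw [hat] at this
      simpa using this.symm
    · have hat : a - (((a - t).toNat : ℕ) : ℤ) = t := by omega
      have := win.apply_of_eq (Z2 (a - t).toNat) (show 0 < n by omega)
      rw [hat] at this
      simpa using this.symm
  -- assembling
  refine ⟨x, ⟨hx, ⟨{z | ∀ t : Fin n, z (a + ((t : ℕ) : ℤ)) = x (a + ((t : ℕ) : ℤ))},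
    ?_, ?_⟩, k, hk1, periodic⟩, a, hxa⟩
  · have : {z : ℤ → A | ∀ t : Fin n, z (a + ((t : ℕ) : ℤ)) = x (a + ((t : ℕ) : ℤ))} =
        ⋂ t : Fin n, (fun z : ℤ → A => z (a + ((t : ℕ) : ℤ))) ⁻¹'
          {x (a + ((t : ℕ) : ℤ))} := by
      ext z; simp [Set.mem_iInter]
    rw [this]
    exact isOpen_iInter_of_finite fun t =>
      (continuous_apply _).isOpen_preimage _ (isOpen_discrete _)
  · ext z
    constructor
    · rintro ⟨hzU, hzX⟩
      refine hU z hzX (win.ext fun t ht => ?_)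
      exact hzU ⟨t, ht⟩
    · rintro rfl
      exact ⟨fun t => rfl, hx⟩
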